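/- If π is a crossing partition of {1,…,k}, then there exists no π-consistent graph with exactly k−#π+1 connected components; that is, I*(π) = ∅. -/

import Mathlib

open Finset

section Defs

open scoped Classical

variable {k : ℕ}

/-- Two elements lie in the same block of the partition. -/
def InSameBlock (P : Finpartition (Finset.univ : Finset (Fin k))) (x y : Fin k) : Prop :=
  ∃ B ∈ P.parts, x ∈ B ∧ y ∈ B

/-- A partition of `{1,…,k}` is crossing if there are `a < b < c < d` with `a ∼ c`, `b ∼ d`
but `a` and `c` not in the same block as `b` and `d`. -/
def IsCrossing (P : Finpartition (Finset.univ : Finset (Fin k))) : Prop :=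
  ∃ a b c d : Fin k, a < b ∧ b < c ∧ c < d ∧
    InSameBlock P a c ∧ InSameBlock P b d ∧ ¬ InSameBlock P a b

/-- The closed block `B̄ = B ∪ {l : l - 1 ∈ B}` (indices cyclic). -/
def closedBlock [NeZero k] (B : Finset (Fin k)) : Finset (Fin k) :=
  B ∪ B.image (· + 1)

/-- The multiplicity `m_π(l)`: `2` if `l ∼_π l-1`, and `1` otherwise. -/
noncomputable def multPi [NeZero k] (P : Finpartition (Finset.univ : Finset (Fin k)))
    (l : Fin k) : ℕ :=
  if InSameBlock P l (l - 1) then 2 else 1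

/-- Number of endpoints of the edge `e` equal to `v`, counted with multiplicity
(a loop at `v` counts twice). -/
def endCount (v : Fin k) (e : Sym2 (Fin k)) : ℕ :=
  Sym2.lift ⟨fun a b => (if a = v then 1 else 0) + (if b = v then 1 else 0),
    fun _ _ => add_comm _ _⟩ e

/-- Degree of the vertex `v` in the multiset of edges `M`. -/
def degIn (v : Fin k) (M : Multiset (Sym2 (Fin k))) : ℕ :=
  (M.map (endCount v)).sum

/-- The simple graph underlying the multigraph with edge multiset `M`. -/
def graphOf (M : Multiset (Sym2 (Fin k))) : SimpleGraph (Fin k) where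
  Adj v w := v ≠ w ∧ s(v, w) ∈ M
  symm := by
    constructor
    intro v w h
    exact ⟨Ne.symm h.1, by rw [Sym2.eq_swap]; exact h.2⟩
  loopless := ⟨fun v h => h.1 rfl⟩

/-- Number of connected components of the multigraph with edge multiset `M`
(isolated vertices and vertices carrying only loops count as components). -/
noncomputable def numComponents (M : Multiset (Sym2 (Fin k))) : ℕ :=
  Nat.card (graphOf M).ConnectedComponent

/-- `M` together with the decomposition `F` is a `π`-consistent multigraph:
`M` has `k` edges; `M` is the disjoint union of the `F B`, `B` a block of `π`;
the ends of every edge of `F B` lie in the closed block `B̄`; and in the submultigraph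
`(B̄, F B)` every vertex `l ∈ B̄` has degree `m_π(l)`. -/
def IsConsistentDecomp [NeZero k] (P : Finpartition (Finset.univ : Finset (Fin k)))
    (M : Multiset (Sym2 (Fin k))) (F : Finset (Fin k) → Multiset (Sym2 (Fin k))) : Prop :=
  Multiset.card M = k ∧
  M = ∑ B ∈ P.parts, F B ∧
  (∀ B ∈ P.parts, ∀ e ∈ F B, ∀ v ∈ e, v ∈ closedBlock B) ∧
  (∀ B ∈ P.parts, ∀ v ∈ closedBlock B, degIn v (F B) = multPi P v)

/-- A `π`-consistent multigraph. -/
def Consistent [NeZero k] (P : Finpartition (Finset.univ : Finset (Fin k)))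
    (M : Multiset (Sym2 (Fin k))) : Prop :=
  ∃ F, IsConsistentDecomp P M F

end Defs

section Aux

set_option linter.unusedSectionVars false

open scoped Classical

variable {k : ℕ} [NeZero k]

lemma endCount_mk (v a b : Fin k) :
    endCount v s(a, b) = (if a = v then 1 else 0) + (if b = v then 1 else 0) := rfl

lemma endCount_eq_zero {v : Fin k} {e : Sym2 (Fin k)} (h : v ∉ e) : endCount v e = 0 := by
  induction e using Sym2.ind with
  | _ a b =>
    rw [Sym2.mem_iff] at h
    push_neg at h
    simp [endCount_mk, Ne.symm h.1, Ne.symm h.2]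

lemma mem_of_endCount_pos {v : Fin k} {e : Sym2 (Fin k)} (h : 0 < endCount v e) : v ∈ e := by
  by_contra hv
  rw [endCount_eq_zero hv] at h
  omega

lemma mem_closedBlock {B : Finset (Fin k)} {v : Fin k} :
    v ∈ closedBlock B ↔ v ∈ B ∨ v - 1 ∈ B := by
  unfold closedBlock
  rw [Finset.mem_union, Finset.mem_image]
  constructor
  · rintro (h | ⟨w, hw, rfl⟩)
    · exact Or.inl h
    · exact Or.inr (by simpa using hw)
  · rintro (h | h)
    · exact Or.inl h
    · exact Or.inr ⟨v - 1, h, by simp⟩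

lemma sum_endCount (S : Finset (Fin k)) (a b : Fin k) :
    ∑ v ∈ S, endCount v s(a, b) = (if a ∈ S then 1 else 0) + (if b ∈ S then 1 else 0) := by
  simp only [endCount_mk, Finset.sum_add_distrib]
  congr 1 <;> simp [Finset.sum_ite_eq' S]

/-- handshake over a closed set of vertices -/
lemma handshake (N : Multiset (Sym2 (Fin k))) (p : Fin k → Prop)
    (hcl : ∀ e ∈ N, ∀ x ∈ e, ∀ y ∈ e, p x → p y) :
    ∑ v ∈ Finset.univ.filter p, degIn v N
      = 2 * Multiset.card (N.filter (fun e => ∀ x ∈ e, p x)) := by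
  induction N using Multiset.induction with
  | empty => simp [degIn]
  | cons e N ih =>
    have hclN : ∀ e ∈ N, ∀ x ∈ e, ∀ y ∈ e, p x → p y := by
      intro e' he' x hx y hy
      exact hcl e' (Multiset.mem_cons_of_mem he') x hx y hy
    have hcle : ∀ x ∈ e, ∀ y ∈ e, p x → p y := by
      intro x hx y hy
      exact hcl e (Multiset.mem_cons_self e N) x hx y hy
    have hsum : ∀ v, degIn v (e ::ₘ N) = endCount v e + degIn v N := by
      intro v; simp [degIn]
    simp only [hsum, Finset.sum_add_distrib, ih hclN]
    induction e using Sym2.ind with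
    | _ a b =>
      have hab : p a → p b := hcle a (Sym2.mem_mk_left a b) b (Sym2.mem_mk_right a b)
      have hba : p b → p a := hcle b (Sym2.mem_mk_right a b) a (Sym2.mem_mk_left a b)
      rw [sum_endCount]
      by_cases hpa : p a
      · have hpb : p b := hab hpa
        rw [Multiset.filter_cons_of_pos]
        · simp [hpa, hpb]
          ring
        · intro x hx
          rw [Sym2.mem_iff] at hx
          rcases hx with rfl | rfl
          · exact hpa
          · exact hpb
      · have hpb : ¬ p b := fun h => hpa (hba h)
        rw [Multiset.filter_cons_of_neg]
        · simp [hpa, hpb]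
        · intro hall
          exact hpa (hall a (Sym2.mem_mk_left a b))
    
lemma multiset_card_eq_sum_filter_fiber {α β : Type*} [Fintype β] [DecidableEq β]
    (N : Multiset α) (g : α → β) :
    Multiset.card N = ∑ c : β, Multiset.card (N.filter (fun e => g e = c)) := by
  induction N using Multiset.induction with
  | empty => simp
  | cons e N ih =>
    have : ∀ c : β, Multiset.card ((e ::ₘ N).filter (fun e => g e = c))
        = (if g e = c then 1 else 0) + Multiset.card (N.filter (fun e => g e = c)) := by
      intro c
      by_cases h : g e = c <;> simp [Multiset.filter_cons, h] <;> omega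
    simp only [this, Finset.sum_add_distrib, ← ih, Multiset.card_cons]
    simp [Finset.sum_ite_eq]
    omega

end Aux

section AuxTree

open SimpleGraph

lemma aux_connected_card_le {V : Type*} [Fintype V] (n : ℕ) (G : SimpleGraph V)
    (hG : G.Connected) (hn : Nat.card G.edgeSet = n) :
    Fintype.card V ≤ n + 1 ∧ (Fintype.card V = n + 1 → G.IsAcyclic) := by
  classical
  induction n using Nat.strong_induction_on generalizing G with
  | _ n ih =>
    by_cases hac : G.IsAcyclic
    · have htree : G.IsTree := ⟨hG, hac⟩
      have hcard := htree.card_edgeFinset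
      have hEq : Nat.card G.edgeSet = G.edgeFinset.card := by
        rw [Nat.card_eq_fintype_card, ← Set.toFinset_card]
        congr 1
      rw [hEq] at hn
      constructor
      · omega
      · intro _; exact hac
    · rw [isAcyclic_iff_forall_adj_isBridge] at hac
      push_neg at hac
      obtain ⟨v, w, hadj, hnb⟩ := hac
      rw [isBridge_iff] at hnb
      push_neg at hnb
      have hvw : (G.deleteEdges {s(v, w)}).Reachable v w := hnb
      set G' := G.deleteEdges {s(v, w)} with hG'
      have hstep : ∀ {a b : V}, G.Adj a b → G'.Reachable a b := by
        intro a b hab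
        by_cases he : s(a, b) = s(v, w)
        · rw [Sym2.eq_iff] at he
          rcases he with ⟨rfl, rfl⟩ | ⟨rfl, rfl⟩
          · exact hvw
          · exact hvw.symm
        · exact SimpleGraph.Adj.reachable (by simp [hG', he, hab])
      have hconn' : G'.Connected := by
        rw [connected_iff] at hG ⊢
        refine ⟨?_, hG.2⟩
        intro a b
        obtain ⟨p⟩ := hG.1 a b
        induction p with
        | nil => exact Reachable.refl _
        | cons h p ihp => exact (hstep h).trans ihp
      have hmem : s(v, w) ∈ G.edgeSet := hadj
      have hfin : G.edgeSet.Finite := Set.toFinite _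
      have hedge : (G'.edgeSet) = G.edgeSet \ {s(v, w)} := edgeSet_deleteEdges _
      have hcard' : Nat.card G'.edgeSet = n - 1 := by
        rw [hedge, Nat.card_coe_set_eq,
          Set.ncard_diff_singleton_of_mem hmem, ← Nat.card_coe_set_eq, hn]
      have hpos : 1 ≤ n := by
        have h0 : 0 < G.edgeSet.ncard := (Set.ncard_pos hfin).mpr ⟨_, hmem⟩
        rw [Nat.card_coe_set_eq] at hn
        omega
      obtain ⟨h1, _⟩ := ih (n - 1) (by omega) G' hconn' hcard'
      constructor
      · omega
      · intro h; omega

end AuxTree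



section Aux2

set_option linter.unusedSectionVars false

open scoped Classical
open SimpleGraph

variable {k : ℕ} [NeZero k] {P : Finpartition (Finset.univ : Finset (Fin k))}
  {M : Multiset (Sym2 (Fin k))} {F : Finset (Fin k) → Multiset (Sym2 (Fin k))}
  {B : Finset (Fin k)}

lemma part_eq_of_mem (P : Finpartition (Finset.univ : Finset (Fin k)))
    (hB : B ∈ P.parts) {l : Fin k} (hl : l ∈ B) : P.part l = B :=
  (P.existsUnique_mem (Finset.mem_univ l)).unique
    ⟨P.part_mem.2 (Finset.mem_univ l), P.mem_part (Finset.mem_univ l)⟩ ⟨hB, hl⟩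

lemma inSameBlock_iff {x y : Fin k} : InSameBlock P x y ↔ y ∈ P.part x := by
  constructor
  · rintro ⟨B, hB, hx, hy⟩
    rwa [part_eq_of_mem P hB hx]
  · intro h
    exact ⟨P.part x, P.part_mem.2 (Finset.mem_univ x), P.mem_part (Finset.mem_univ x), h⟩

lemma degIn_eq (hF : IsConsistentDecomp P M F) (hB : B ∈ P.parts) (v : Fin k) :
    degIn v (F B) = (if v ∈ B then 1 else 0) + (if v - 1 ∈ B then 1 else 0) := by
  by_cases hv : v ∈ closedBlock B
  · rw [hF.2.2.2 B hB v hv, multPi]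
    by_cases h1 : v ∈ B <;> by_cases h2 : v - 1 ∈ B
    · rw [if_pos ⟨B, hB, h1, h2⟩]; simp [h1, h2]
    · rw [if_neg, if_pos h1, if_neg h2]
      rintro ⟨B', hB', hvB', hv1B'⟩
      rw [← part_eq_of_mem P hB' hvB', part_eq_of_mem P hB h1] at hv1B'
      exact h2 hv1B'
    · rw [if_neg, if_neg h1, if_pos h2]
      rintro ⟨B', hB', hvB', hv1B'⟩
      rw [← part_eq_of_mem P hB' hv1B', part_eq_of_mem P hB h2] at hvB'
      exact h1 hvB'
    · rcases mem_closedBlock.mp hv with h | h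
      · exact absurd h h1
      · exact absurd h h2
  · have h0 : degIn v (F B) = 0 := by
      unfold degIn
      apply Multiset.sum_eq_zero
      intro x hx
      obtain ⟨e, he, rfl⟩ := Multiset.mem_map.mp hx
      exact endCount_eq_zero (fun hmem => hv (hF.2.2.1 B hB e he v hmem))
    rw [mem_closedBlock] at hv
    push_neg at hv
    rw [h0, if_neg hv.1, if_neg hv.2]

lemma F_le_M (hF : IsConsistentDecomp P M F) (hB : B ∈ P.parts) : F B ≤ M := by
  rw [hF.2.1]
  exact Finset.single_le_sum (f := F) (fun i _ => Multiset.zero_le _) hB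

lemma comp_eq_of_mem_edge {e : Sym2 (Fin k)} (he : e ∈ M) {x y : Fin k}
    (hx : x ∈ e) (hy : y ∈ e) :
    (graphOf M).connectedComponentMk x = (graphOf M).connectedComponentMk y := by
  induction e using Sym2.ind with
  | _ a b =>
    have hab : (graphOf M).connectedComponentMk a = (graphOf M).connectedComponentMk b := by
      by_cases h : a = b
      · rw [h]
      · exact SimpleGraph.ConnectedComponent.sound (SimpleGraph.Adj.reachable (And.intro h he))
    rw [Sym2.mem_iff] at hx hy
    rcases hx with rfl | rfl <;> rcases hy with rfl | rfl
    · rfl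
    · exact hab
    · exact hab.symm
    · rfl

lemma exists_edge (hF : IsConsistentDecomp P M F) (hB : B ∈ P.parts) {v : Fin k}
    (hv : v ∈ closedBlock B) : ∃ e ∈ F B, v ∈ e := by
  have hdeg : 0 < degIn v (F B) := by
    rw [hF.2.2.2 B hB v hv]
    unfold multPi
    split <;> omega
  by_contra h
  push_neg at h
  have h0 : degIn v (F B) = 0 := by
    unfold degIn
    apply Multiset.sum_eq_zero
    intro x hx
    obtain ⟨e, he, rfl⟩ := Multiset.mem_map.mp hx
    by_contra h0
    exact h e he (mem_of_endCount_pos (Nat.pos_of_ne_zero h0))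
  omega

/-- number of edges of `F B` lying in component `c` -/
noncomputable def cntBC (F : Finset (Fin k) → Multiset (Sym2 (Fin k)))
    (M : Multiset (Sym2 (Fin k))) (B : Finset (Fin k))
    (c : (graphOf M).ConnectedComponent) : ℕ :=
  Multiset.card ((F B).filter (fun e => ∀ x ∈ e, (graphOf M).connectedComponentMk x = c))

lemma cntBC_pos (hF : IsConsistentDecomp P M F) (hB : B ∈ P.parts) {v : Fin k}
    (hv : v ∈ closedBlock B) : 0 < cntBC F M B ((graphOf M).connectedComponentMk v) := by
  obtain ⟨e, he, hve⟩ := exists_edge hF hB hv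
  rw [cntBC, Multiset.card_pos_iff_exists_mem]
  refine ⟨e, Multiset.mem_filter.mpr ⟨he, ?_⟩⟩
  intro x hx
  exact comp_eq_of_mem_edge (Multiset.mem_of_le (F_le_M hF hB) he) hx hve

lemma sum_deg_comp (hF : IsConsistentDecomp P M F) (hB : B ∈ P.parts)
    (c : (graphOf M).ConnectedComponent) :
    ∑ v ∈ Finset.univ.filter (fun v => (graphOf M).connectedComponentMk v = c), degIn v (F B)
      = 2 * cntBC F M B c := by
  apply handshake
  intro e he x hx y hy hxc
  rw [← hxc]
  exact comp_eq_of_mem_edge (Multiset.mem_of_le (F_le_M hF hB) he) hy hx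

end Aux2

section Bip

open SimpleGraph
open scoped Classical

variable {α β : Type*}

def bipGraph (r : α → β → Prop) : SimpleGraph (α ⊕ β) where
  Adj x y := (∃ a b, r a b ∧ x = .inl a ∧ y = .inr b) ∨ (∃ a b, r a b ∧ x = .inr b ∧ y = .inl a)
  symm := by
    constructor
    rintro x y (⟨a, b, h, rfl, rfl⟩ | ⟨a, b, h, rfl, rfl⟩)
    · exact Or.inr ⟨a, b, h, rfl, rfl⟩
    · exact Or.inl ⟨a, b, h, rfl, rfl⟩
  loopless := by
    constructor
    rintro x (⟨a, b, h, rfl, h2⟩ | ⟨a, b, h, rfl, h2⟩) <;> simp at h2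

@[simp] lemma bipGraph_adj_inl_inr {r : α → β → Prop} {a : α} {b : β} :
    (bipGraph r).Adj (.inl a) (.inr b) ↔ r a b := by
  constructor
  · rintro (⟨a', b', h, ha, hb⟩ | ⟨a', b', h, ha, hb⟩) <;> simp_all
  · intro h; exact Or.inl ⟨a, b, h, rfl, rfl⟩

@[simp] lemma bipGraph_adj_inr_inl {r : α → β → Prop} {a : α} {b : β} :
    (bipGraph r).Adj (.inr b) (.inl a) ↔ r a b := by
  constructor
  · rintro (⟨a', b', h, ha, hb⟩ | ⟨a', b', h, ha, hb⟩) <;> simp_all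
  · intro h; exact Or.inr ⟨a, b, h, rfl, rfl⟩

@[simp] lemma bipGraph_adj_inl_inl {r : α → β → Prop} {a a' : α} :
    ¬ (bipGraph r).Adj (.inl a) (.inl a') := by
  rintro (⟨x, y, h, h1, h2⟩ | ⟨x, y, h, h1, h2⟩) <;> simp_all

@[simp] lemma bipGraph_adj_inr_inr {r : α → β → Prop} {b b' : β} :
    ¬ (bipGraph r).Adj (.inr b) (.inr b') := by
  rintro (⟨x, y, h, h1, h2⟩ | ⟨x, y, h, h1, h2⟩) <;> simp_all

lemma bipGraph_card_edge [Fintype α] [Fintype β] (r : α → β → Prop) :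
    Nat.card (bipGraph r).edgeSet
      = (Finset.univ.filter (fun p : α × β => r p.1 p.2)).card := by
  classical
  rw [Nat.card_eq_fintype_card, ← Set.toFinset_card]
  have hEF : (bipGraph r).edgeSet.toFinset = (bipGraph r).edgeFinset := rfl
  rw [hEF]
  symm
  apply Finset.card_bij (fun (p : α × β) _ => s(Sum.inl p.1, Sum.inr p.2))
  · intro p hp
    rw [SimpleGraph.mem_edgeFinset, SimpleGraph.mem_edgeSet]
    simp only [Finset.mem_filter] at hp
    simpa using hp.2
  · intro p hp q hq h
    rw [Sym2.eq_iff] at h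
    rcases h with ⟨h1, h2⟩ | ⟨h1, h2⟩
    · simp only [Sum.inl.injEq] at h1
      simp only [Sum.inr.injEq] at h2
      exact Prod.ext h1 h2
    · simp at h1
  · intro e he
    rw [SimpleGraph.mem_edgeFinset] at he
    induction e using Sym2.ind with
    | _ x y =>
      rw [SimpleGraph.mem_edgeSet] at he
      rcases x with a | b <;> rcases y with a' | b'
      · exact absurd he (bipGraph_adj_inl_inl)
      · refine ⟨(a, b'), ?_, rfl⟩
        simp only [Finset.mem_filter, Finset.mem_univ, true_and]
        simpa using he
      · refine ⟨(a', b), ?_, ?_⟩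
        · simp only [Finset.mem_filter, Finset.mem_univ, true_and]
          simpa using he
        · exact Sym2.eq_swap
      · exact absurd he (bipGraph_adj_inr_inr)

end Bip

section Count

set_option linter.unusedSectionVars false

open scoped Classical
open SimpleGraph

variable {k : ℕ} [NeZero k] {P : Finpartition (Finset.univ : Finset (Fin k))}
  {M : Multiset (Sym2 (Fin k))} {F : Finset (Fin k) → Multiset (Sym2 (Fin k))}
  {B : Finset (Fin k)}

lemma card_filter_sum {ι α : Type*} (s : Finset ι) (f : ι → Multiset α) (p : α → Prop)
    [DecidablePred p] :
    Multiset.card ((∑ i ∈ s, f i).filter p) = ∑ i ∈ s, Multiset.card ((f i).filter p) := by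
  induction s using Finset.cons_induction with
  | empty => simp
  | cons i s hi ih => rw [Finset.sum_cons, Multiset.filter_add, Multiset.card_add, ih,
      Finset.sum_cons]

lemma sym2_exists_rep {γ : Type*} (e : Sym2 γ) : ∃ p : γ × γ, e = s(p.1, p.2) := by
  induction e using Sym2.ind with
  | _ a b => exact ⟨(a, b), rfl⟩

noncomputable def edgeFst {γ : Type*} (e : Sym2 γ) : γ :=
  (Classical.choose (sym2_exists_rep e)).1

lemma edgeFst_mem {γ : Type*} (e : Sym2 γ) : edgeFst e ∈ e := by
  rw [Sym2.mem_iff_exists]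
  exact ⟨(Classical.choose (sym2_exists_rep e)).2, Classical.choose_spec (sym2_exists_rep e)⟩

/-- number of edges of `M` inside component `c` -/
noncomputable def cntC (M : Multiset (Sym2 (Fin k))) (c : (graphOf M).ConnectedComponent) : ℕ :=
  Multiset.card (M.filter (fun e => ∀ x ∈ e, (graphOf M).connectedComponentMk x = c))

lemma sum_cntC : ∑ c : (graphOf M).ConnectedComponent, cntC M c = Multiset.card M := by
  rw [multiset_card_eq_sum_filter_fiber M
    (fun e => (graphOf M).connectedComponentMk (edgeFst e))]
  apply Finset.sum_congr rfl
  intro c _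
  unfold cntC
  congr 1
  apply Multiset.filter_congr
  intro e he
  constructor
  · intro h; exact h _ (edgeFst_mem e)
  · intro h x hx
    rw [← h]
    exact comp_eq_of_mem_edge he hx (edgeFst_mem e)

lemma cntC_eq_sum (hF : IsConsistentDecomp P M F) (c : (graphOf M).ConnectedComponent) :
    cntC M c = ∑ Bs : {B // B ∈ P.parts}, cntBC F M Bs.1 c := by
  rw [Finset.sum_coe_sort P.parts (fun B => cntBC F M B c)]
  unfold cntC cntBC
  have h := card_filter_sum P.parts F
    (fun e => ∀ x ∈ e, (graphOf M).connectedComponentMk x = c)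
  rw [← hF.2.1] at h
  exact h

/-- number of blocks meeting component `c` -/
noncomputable def qC (P : Finpartition (Finset.univ : Finset (Fin k)))
    (M : Multiset (Sym2 (Fin k))) (F : Finset (Fin k) → Multiset (Sym2 (Fin k)))
    (c : (graphOf M).ConnectedComponent) : ℕ :=
  (Finset.univ.filter (fun Bs : {B // B ∈ P.parts} => 0 < cntBC F M Bs.1 c)).card

lemma qC_le_cntC (hF : IsConsistentDecomp P M F) (c : (graphOf M).ConnectedComponent) :
    qC P M F c ≤ cntC M c := by
  rw [cntC_eq_sum hF, qC, Finset.card_filter]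
  apply Finset.sum_le_sum
  intro Bs _
  split <;> omega

end Count

section Inc

set_option linter.unusedSectionVars false

open scoped Classical
open SimpleGraph

variable {k : ℕ} [NeZero k] {P : Finpartition (Finset.univ : Finset (Fin k))}
  {M : Multiset (Sym2 (Fin k))} {F : Finset (Fin k) → Multiset (Sym2 (Fin k))}

/-- The incidence graph between connected components and blocks. -/
noncomputable def incG (P : Finpartition (Finset.univ : Finset (Fin k)))
    (M : Multiset (Sym2 (Fin k))) (F : Finset (Fin k) → Multiset (Sym2 (Fin k))) :
    SimpleGraph ((graphOf M).ConnectedComponent ⊕ {B // B ∈ P.parts}) :=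
  bipGraph (fun c Bs => 0 < cntBC F M Bs.1 c)

lemma incG_adj_part (hF : IsConsistentDecomp P M F) {v : Fin k} {B : Finset (Fin k)}
    (hB : B ∈ P.parts) (hv : v ∈ closedBlock B) :
    (incG P M F).Adj (.inl ((graphOf M).connectedComponentMk v)) (.inr ⟨B, hB⟩) := by
  rw [incG, bipGraph_adj_inl_inr]
  exact cntBC_pos hF hB hv

lemma mem_closedBlock_self {B : Finset (Fin k)} {v : Fin k} (hv : v ∈ B) :
    v ∈ closedBlock B := mem_closedBlock.mpr (Or.inl hv)

lemma mem_closedBlock_succ {B : Finset (Fin k)} {v : Fin k} (hv : v ∈ B) :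
    v + 1 ∈ closedBlock B := by
  apply mem_closedBlock.mpr
  right
  rwa [add_sub_cancel_right]

lemma incG_connected (hF : IsConsistentDecomp P M F) : (incG P M F).Connected := by
  have hub_mem : ∀ l : Fin k, P.part l ∈ P.parts := fun l => P.part_mem.2 (Finset.mem_univ l)
  set hub : (graphOf M).ConnectedComponent ⊕ {B // B ∈ P.parts} :=
    .inr ⟨P.part 0, hub_mem 0⟩ with hhub
  have hvert : ∀ l : Fin k,
      (incG P M F).Adj (.inl ((graphOf M).connectedComponentMk l)) (.inr ⟨P.part l, hub_mem l⟩) :=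
    fun l => incG_adj_part hF (hub_mem l) (mem_closedBlock_self (P.mem_part (Finset.mem_univ l)))
  have hchain : ∀ l : Fin k, (incG P M F).Reachable
      (.inr ⟨P.part l, hub_mem l⟩) (.inr ⟨P.part (l + 1), hub_mem (l + 1)⟩) := by
    intro l
    have h1 : (incG P M F).Adj (.inl ((graphOf M).connectedComponentMk (l + 1)))
        (.inr ⟨P.part l, hub_mem l⟩) :=
      incG_adj_part hF (hub_mem l) (mem_closedBlock_succ (P.mem_part (Finset.mem_univ l)))
    exact (h1.symm.reachable).trans (hvert (l + 1)).reachable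
  have hall : ∀ l : Fin k, (incG P M F).Reachable hub (.inr ⟨P.part l, hub_mem l⟩) := by
    have key : ∀ n : ℕ, ∀ hn : n < k,
        (incG P M F).Reachable hub (.inr ⟨P.part ⟨n, hn⟩, hub_mem ⟨n, hn⟩⟩) := by
      intro n
      induction n with
      | zero =>
        intro hn
        have : (⟨0, hn⟩ : Fin k) = 0 := by
          apply Fin.ext
          simp [Fin.val_zero]
        rw [this]
      | succ n ih =>
        intro hn
        have hn' : n < k := by omega
        have hk2 : 2 ≤ k := by omega
        have hstep : (⟨n + 1, hn⟩ : Fin k) = ⟨n, hn'⟩ + 1 := by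
          apply Fin.ext
          rw [Fin.val_add, Fin.val_one', Nat.mod_eq_of_lt hk2, Nat.mod_eq_of_lt hn]
        rw [hstep]
        exact (ih hn').trans (hchain ⟨n, hn'⟩)
    intro l
    have := key l.val l.isLt
    simpa using this
  have hto : ∀ x, (incG P M F).Reachable x hub := by
    rintro (c | ⟨B, hB⟩)
    · obtain ⟨v, hv⟩ := Quot.exists_rep c
      have hv' : (graphOf M).connectedComponentMk v = c := hv
      rw [← hv']
      exact ((hvert v).reachable).trans (hall v).symm
    · obtain ⟨l, hl⟩ := P.nonempty_of_mem_parts hB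
      have : (⟨B, hB⟩ : {B // B ∈ P.parts}) = ⟨P.part l, hub_mem l⟩ :=
        Subtype.ext (part_eq_of_mem P hB hl).symm
      rw [this]
      exact (hall l).symm
  constructor
  intro x y
  exact (hto x).trans (hto y).symm

end Inc


section Final

open scoped Classical
open SimpleGraph

variable {k : ℕ}

lemma exists_change {k : ℕ} [NeZero k] (χ : Fin k → Prop) :
    ∀ (n : ℕ) (x : Fin k) (hn : x.val + n < k), ¬(χ x ↔ χ ⟨x.val + n, hn⟩) →
      ∃ l : Fin k, x.val ≤ l.val ∧ l.val < x.val + n ∧ ¬(χ l ↔ χ (l + 1)) := by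
  intro n
  induction n with
  | zero =>
    intro x hn h
    exfalso
    apply h
    have hx : (⟨x.val + 0, hn⟩ : Fin k) = x := Fin.ext (by simp)
    rw [hx]
  | succ n ih =>
    intro x hn h
    have hn' : x.val + n < k := by omega
    by_cases h2 : χ (⟨x.val + n, hn'⟩ : Fin k) ↔ χ (⟨x.val + n + 1, hn⟩ : Fin k)
    · have h3 : ¬(χ x ↔ χ (⟨x.val + n, hn'⟩ : Fin k)) := by tauto
      obtain ⟨l, h4, h5, h6⟩ := ih x hn' h3
      exact ⟨l, h4, by omega, h6⟩
    · refine ⟨⟨x.val + n, hn'⟩, by simp, by simp, ?_⟩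
      have hs : (⟨x.val + n, hn'⟩ : Fin k) + 1 = (⟨x.val + n + 1, hn⟩ : Fin k) := by
        apply Fin.ext
        rw [Fin.val_add, Fin.val_one']
        show (x.val + n + 1 % k) % k = x.val + n + 1
        rw [Nat.mod_eq_of_lt (show 1 < k by omega),
          Nat.mod_eq_of_lt (show x.val + n + 1 < k by omega)]
      rw [hs]
      exact h2

set_option maxHeartbeats 1000000 in
/-- **Lemma (crossing partitions admit no maximal consistent graph).**
If `π` is a crossing partition of `{1,…,k}`, then there is no `π`-consistent multigraph with
exactly `k - #π + 1` connected components, i.e. `I*(π) = ∅`. -/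
theorem crossing_no_maximal_consistent_graph (k : ℕ) [NeZero k]
    (P : Finpartition (Finset.univ : Finset (Fin k)))
    (hP : IsCrossing P) :
    ¬ ∃ M : Multiset (Sym2 (Fin k)),
        Consistent P M ∧ numComponents M = k - P.parts.card + 1 := by
  classical
  rintro ⟨M, ⟨F, hF⟩, hc⟩
  obtain ⟨a, b, c0, d, hab, hbc, hcd, ⟨A, hA, haA, hcA⟩, ⟨Bb, hBb, hbB, hdB⟩, hnab⟩ := hP
  set q := P.parts.card with hq
  have hqk : q ≤ k := by
    have h := P.card_parts_le_card
    simpa using h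
  have hCC : Fintype.card (graphOf M).ConnectedComponent = k - q + 1 := by
    rw [← Nat.card_eq_fintype_card]
    exact hc
  have hV : Fintype.card ((graphOf M).ConnectedComponent ⊕ {B // B ∈ P.parts}) = k + 1 := by
    rw [Fintype.card_sum, hCC, Fintype.card_coe, ← hq]
    omega
  have hE : Nat.card (incG P M F).edgeSet
      = ∑ c : (graphOf M).ConnectedComponent, qC P M F c := by
    rw [incG, bipGraph_card_edge, Finset.card_filter, Fintype.sum_prod_type]
    apply Finset.sum_congr rfl
    intro c _
    rw [qC, Finset.card_filter]
    exact Finset.sum_congr rfl (fun y _ => by congr!)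
  have hsum_cnt : ∑ c : (graphOf M).ConnectedComponent, cntC M c = k := by
    rw [sum_cntC, hF.1]
  have hEk : Nat.card (incG P M F).edgeSet ≤ k := by
    rw [hE]
    exact le_trans (Finset.sum_le_sum (fun c _ => qC_le_cntC hF c)) (le_of_eq hsum_cnt)
  have hconn := incG_connected hF
  obtain ⟨hle, hacyc'⟩ := aux_connected_card_le (Nat.card (incG P M F).edgeSet)
    (incG P M F) hconn rfl
  rw [hV] at hle hacyc'
  have hEeq : Nat.card (incG P M F).edgeSet = k := by omega
  have hacyc : (incG P M F).IsAcyclic := hacyc' (by omega)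
  -- termwise equality
  have hsums : ∑ c : (graphOf M).ConnectedComponent, qC P M F c
      = ∑ c : (graphOf M).ConnectedComponent, cntC M c := by
    rw [← hE, hEeq, hsum_cnt]
  have hterm : ∀ c, qC P M F c = cntC M c := by
    have h := (Finset.sum_eq_sum_iff_of_le
      (fun c (_ : c ∈ Finset.univ) => qC_le_cntC hF c)).mp hsums
    intro c
    exact h c (Finset.mem_univ c)
  have hone : ∀ (c : (graphOf M).ConnectedComponent) (Bs : {B // B ∈ P.parts}),
      0 < cntBC F M Bs.1 c → cntBC F M Bs.1 c = 1 := by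
    intro c
    have h1 : qC P M F c
        = ∑ Bs : {B // B ∈ P.parts}, (if 0 < cntBC F M Bs.1 c then 1 else 0) := by
      rw [qC, Finset.card_filter]
    have h2 := cntC_eq_sum hF c
    have h3 : ∑ Bs : {B // B ∈ P.parts}, (if 0 < cntBC F M Bs.1 c then 1 else 0)
        = ∑ Bs : {B // B ∈ P.parts}, cntBC F M Bs.1 c := by
      rw [← h1, ← h2, hterm c]
    have h4 := (Finset.sum_eq_sum_iff_of_le
      (fun Bs (_ : Bs ∈ Finset.univ) => by split <;> omega)).mp h3
    intro Bs hpos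
    have := h4 Bs (Finset.mem_univ Bs)
    rw [if_pos hpos] at this
    omega
  -- crossing data
  have hAB : A ≠ Bb := fun h => hnab ⟨A, hA, haA, h ▸ hbB⟩
  set vA : (graphOf M).ConnectedComponent ⊕ {B // B ∈ P.parts} := .inr ⟨A, hA⟩ with hvA
  set vB : (graphOf M).ConnectedComponent ⊕ {B // B ∈ P.parts} := .inr ⟨Bb, hBb⟩ with hvB
  have hvAB : vA ≠ vB := by
    rw [hvA, hvB]
    intro h
    exact hAB (Subtype.ext_iff.mp (Sum.inr.inj h))
  obtain ⟨w⟩ := hconn.preconnected vA vB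
  set pp : (incG P M F).Walk vA vB := w.toPath.1 with hpp
  have hpath : pp.IsPath := w.toPath.2
  have hnn : ¬ pp.Nil := by
    intro hnil
    rw [SimpleGraph.Walk.nil_iff_support_eq] at hnil
    have hend := pp.end_mem_support
    rw [hnil] at hend
    simp at hend
    exact hvAB hend.symm
  obtain ⟨x, hadj, qw, hpq⟩ := SimpleGraph.Walk.not_nil_iff.mp hnn
  rcases x with Z0 | Bs'
  swap
  · rw [hvA] at hadj
    rw [incG] at hadj
    exact absurd hadj bipGraph_adj_inr_inr
  -- the bridge edge
  have hadj' : (incG P M F).Adj vA (.inl Z0) := hadj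
  have hMeets : 0 < cntBC F M A Z0 := by
    rw [hvA, incG] at hadj'
    rwa [bipGraph_adj_inr_inl] at hadj'
  have hbr : (incG P M F).IsBridge s(vA, .inl Z0) :=
    (isAcyclic_iff_forall_adj_isBridge.mp hacyc) hadj'
  rw [SimpleGraph.isBridge_iff] at hbr
  have hnr : ¬ ((incG P M F).deleteEdges {s(vA, .inl Z0)}).Reachable vA (.inl Z0) := hbr
  set Γ' := (incG P M F).deleteEdges {s(vA, .inl Z0)} with hΓ'
  -- the tail avoids the bridge
  have hq_path : qw.IsPath ∧ vA ∉ qw.support := by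
    rw [hpq, SimpleGraph.Walk.cons_isPath_iff] at hpath
    exact hpath
  have hq_avoid : ∀ e ∈ qw.edges, e ∉ ({s(vA, .inl Z0)} : Set (Sym2 _)) := by
    intro e he hmem
    rw [Set.mem_singleton_iff] at hmem
    subst hmem
    exact hq_path.2 (SimpleGraph.Walk.fst_mem_support_of_mem_edges qw he)
  have hq' : Γ'.Reachable (.inl Z0) vB := ⟨qw.toDeleteEdges _ hq_avoid⟩
  have hnotB : ¬ Γ'.Reachable vA vB := fun hr => hnr (hr.trans hq'.symm)
  -- the side function
  set χ : Fin k → Prop := fun l =>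
    Γ'.Reachable vA (.inr ⟨P.part l, P.part_mem.2 (Finset.mem_univ l)⟩) with hχ
  have hnode : ∀ {l : Fin k} {B} (hB : B ∈ P.parts), l ∈ B →
      (Sum.inr ⟨P.part l, P.part_mem.2 (Finset.mem_univ l)⟩ :
        (graphOf M).ConnectedComponent ⊕ {B // B ∈ P.parts}) = .inr ⟨B, hB⟩ := by
    intro l B hB hl
    exact congrArg Sum.inr (Subtype.ext (part_eq_of_mem P hB hl))
  have hχa : χ a := by
    rw [hχ]
    simp only []
    rw [hnode hA haA, ← hvA]
  have hχc : χ c0 := by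
    rw [hχ]
    simp only []
    rw [hnode hA hcA, ← hvA]
  have hχb : ¬ χ b := by
    rw [hχ]
    simp only []
    rw [hnode hBb hbB, ← hvB]
    exact hnotB
  have hχd : ¬ χ d := by
    rw [hχ]
    simp only []
    rw [hnode hBb hdB, ← hvB]
    exact hnotB
  -- step lemma
  have hstep : ∀ l : Fin k, ¬ (χ l ↔ χ (l + 1)) →
      ((graphOf M).connectedComponentMk (l + 1) = Z0 ∧ (l ∈ A ∨ l + 1 ∈ A)) := by
    intro l hne
    have h1 : (incG P M F).Adj (.inl ((graphOf M).connectedComponentMk (l + 1)))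
        (.inr ⟨P.part l, P.part_mem.2 (Finset.mem_univ l)⟩) :=
      incG_adj_part hF _ (mem_closedBlock_succ (P.mem_part (Finset.mem_univ l)))
    have h2 : (incG P M F).Adj (.inl ((graphOf M).connectedComponentMk (l + 1)))
        (.inr ⟨P.part (l + 1), P.part_mem.2 (Finset.mem_univ (l + 1))⟩) :=
      incG_adj_part hF _ (mem_closedBlock_self (P.mem_part (Finset.mem_univ (l + 1))))
    by_cases he1 : s(Sum.inl ((graphOf M).connectedComponentMk (l + 1)),
        (Sum.inr ⟨P.part l, P.part_mem.2 (Finset.mem_univ l)⟩ :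
          (graphOf M).ConnectedComponent ⊕ {B // B ∈ P.parts})) = s(vA, .inl Z0)
    · rw [Sym2.eq_iff] at he1
      rcases he1 with ⟨hx, hy⟩ | ⟨hx, hy⟩
      · rw [hvA] at hx; simp at hx
      · constructor
        · exact Sum.inl.inj hx
        · left
          rw [hvA] at hy
          have h5 : P.part l = A := Subtype.ext_iff.mp (Sum.inr.inj hy)
          rw [← h5]
          exact P.mem_part (Finset.mem_univ l)
    · by_cases he2 : s(Sum.inl ((graphOf M).connectedComponentMk (l + 1)),
          (Sum.inr ⟨P.part (l + 1), P.part_mem.2 (Finset.mem_univ (l + 1))⟩ :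
            (graphOf M).ConnectedComponent ⊕ {B // B ∈ P.parts})) = s(vA, .inl Z0)
      · rw [Sym2.eq_iff] at he2
        rcases he2 with ⟨hx, hy⟩ | ⟨hx, hy⟩
        · rw [hvA] at hx; simp at hx
        · constructor
          · exact Sum.inl.inj hx
          · right
            rw [hvA] at hy
            have h5 : P.part (l + 1) = A := Subtype.ext_iff.mp (Sum.inr.inj hy)
            rw [← h5]
            exact P.mem_part (Finset.mem_univ (l + 1))
      · exfalso
        apply hne
        have h1' : Γ'.Adj (.inl ((graphOf M).connectedComponentMk (l + 1)))
            (.inr ⟨P.part l, P.part_mem.2 (Finset.mem_univ l)⟩) := by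
          rw [hΓ', SimpleGraph.deleteEdges_adj]
          exact ⟨h1, by rwa [Set.mem_singleton_iff]⟩
        have h2' : Γ'.Adj (.inl ((graphOf M).connectedComponentMk (l + 1)))
            (.inr ⟨P.part (l + 1), P.part_mem.2 (Finset.mem_univ (l + 1))⟩) := by
          rw [hΓ', SimpleGraph.deleteEdges_adj]
          exact ⟨h2, by rwa [Set.mem_singleton_iff]⟩
        rw [hχ]
        constructor
        · intro hr
          exact (hr.trans (h1'.reachable).symm).trans h2'.reachable
        · intro hr
          exact (hr.trans (h2'.reachable).symm).trans h1'.reachable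
  -- upper bound on the number of changes
  set T := Finset.univ.filter (fun l : Fin k => ¬ (χ l ↔ χ (l + 1))) with hT
  have hTcard : T.card ≤ 2 := by
    set S := Finset.univ.filter (fun m : Fin k =>
      (graphOf M).connectedComponentMk m = Z0 ∧ (m ∈ A ∨ m - 1 ∈ A)) with hS
    have hTS : T.card ≤ S.card := by
      apply Finset.card_le_card_of_injOn (fun l => l + 1)
      · intro l hl
        rw [Finset.mem_coe, Finset.mem_filter] at hl
        obtain ⟨hZ, hor⟩ := hstep l hl.2
        rw [Finset.mem_coe, hS, Finset.mem_filter]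
        refine ⟨Finset.mem_univ _, hZ, ?_⟩
        rcases hor with h | h
        · right; rwa [add_sub_cancel_right]
        · left; exact h
      · intro x _ y _ h
        exact add_left_injective 1 h
    have hdeg : ∀ m ∈ S, 1 ≤ degIn m (F A) := by
      intro m hm
      rw [hS, Finset.mem_filter] at hm
      rw [degIn_eq hF hA]
      rcases hm.2.2 with h | h
      · rw [if_pos h]; omega
      · rw [if_pos h]; omega
    have hSsub : S ⊆ Finset.univ.filter
        (fun v => (graphOf M).connectedComponentMk v = Z0) := by
      intro m hm
      rw [hS, Finset.mem_filter] at hm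
      rw [Finset.mem_filter]
      exact ⟨Finset.mem_univ _, hm.2.1⟩
    calc T.card ≤ S.card := hTS
      _ = ∑ m ∈ S, 1 := by rw [Finset.sum_const, smul_eq_mul, mul_one]
      _ ≤ ∑ m ∈ S, degIn m (F A) := Finset.sum_le_sum hdeg
      _ ≤ ∑ m ∈ Finset.univ.filter
            (fun v => (graphOf M).connectedComponentMk v = Z0), degIn m (F A) :=
        Finset.sum_le_sum_of_subset hSsub
      _ = 2 * cntBC F M A Z0 := sum_deg_comp hF hA Z0
      _ = 2 := by rw [hone Z0 ⟨A, hA⟩ hMeets, mul_one]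
  -- lower bound: four changes
  have hmemT : ∀ l : Fin k, ¬ (χ l ↔ χ (l + 1)) → l ∈ T := by
    intro l h
    rw [hT, Finset.mem_filter]
    exact ⟨Finset.mem_univ _, h⟩
  have hchange : ∀ (x y : Fin k), x < y → ¬(χ x ↔ χ y) →
      ∃ l : Fin k, x.val ≤ l.val ∧ l.val < y.val ∧ l ∈ T := by
    intro x y hxy hne
    have hn : x.val + (y.val - x.val) < k := by
      have := y.isLt
      have := Fin.lt_iff_val_lt_val.mp hxy
      omega
    have hy : (⟨x.val + (y.val - x.val), hn⟩ : Fin k) = y := by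
      apply Fin.ext
      have := Fin.lt_iff_val_lt_val.mp hxy
      simp
      omega
    obtain ⟨l, h1, h2, h3⟩ := exists_change χ (y.val - x.val) x hn (by rwa [hy])
    have := Fin.lt_iff_val_lt_val.mp hxy
    exact ⟨l, h1, by omega, hmemT l h3⟩
  obtain ⟨l1, hl1a, hl1b, hl1T⟩ := hchange a b hab (by tauto)
  obtain ⟨l2, hl2a, hl2b, hl2T⟩ := hchange b c0 hbc (by tauto)
  obtain ⟨l3, hl3a, hl3b, hl3T⟩ := hchange c0 d hcd (by tauto)
  -- fourth change: wrap-around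
  have hk1 : k - 1 < k := by have := d.isLt; omega
  set last : Fin k := ⟨k - 1, hk1⟩ with hlast
  have hlast1 : last + 1 = (0 : Fin k) := by
    apply Fin.ext
    rw [Fin.val_add, Fin.val_one']
    have hdlt := d.isLt
    by_cases hk : k = 1
    · subst hk
      simp
    · have hk2 : 1 < k := by omega
      rw [Nat.mod_eq_of_lt hk2]
      show (k - 1 + 1) % k = ((0 : Fin k) : ℕ)
      rw [Fin.val_zero, Nat.sub_add_cancel (by omega), Nat.mod_self]
  have hl4 : ∃ l : Fin k, (d.val ≤ l.val ∨ l.val < a.val) ∧ l ∈ T := by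
    by_cases h1 : χ d ↔ χ last
    · by_cases h2 : χ last ↔ χ 0
      · have h3 : ¬ (χ 0 ↔ χ a) := by tauto
        rcases Nat.eq_zero_or_pos a.val with ha0 | ha0
        · exfalso
          apply h3
          have : (0 : Fin k) = a := by
            apply Fin.ext
            rw [ha0, Fin.val_zero]
          rw [this]
        · have h0a : (0 : Fin k) < a := by
            rw [Fin.lt_iff_val_lt_val, Fin.val_zero]
            exact ha0
          obtain ⟨l, _, hlb, hlT⟩ := hchange 0 a h0a h3
          exact ⟨l, Or.inr hlb, hlT⟩
      · refine ⟨last, Or.inl ?_, hmemT last (by rw [hlast1]; exact h2)⟩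
        have := d.isLt
        simp [hlast]
        omega
    · rcases Nat.lt_or_ge d.val (k - 1) with hdk | hdk
      · have hdlast : d < last := by
          rw [Fin.lt_iff_val_lt_val]
          simpa [hlast] using hdk
        obtain ⟨l, hla, _, hlT⟩ := hchange d last hdlast h1
        exact ⟨l, Or.inl hla, hlT⟩
      · exfalso
        apply h1
        have : d = last := by
          apply Fin.ext
          have := d.isLt
          simp [hlast]
          omega
        rw [this]
  obtain ⟨l4, hl4r, hl4T⟩ := hl4
  -- four distinct elements of T
  have hab' := Fin.lt_iff_val_lt_val.mp hab
  have hbc' := Fin.lt_iff_val_lt_val.mp hbc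
  have hcd' := Fin.lt_iff_val_lt_val.mp hcd
  have hd12 : l1 ≠ l2 := fun h => by rw [h] at hl1b; omega
  have hd13 : l1 ≠ l3 := fun h => by rw [h] at hl1b; omega
  have hd14 : l1 ≠ l4 := by
    intro h
    rw [h] at hl1a hl1b
    rcases hl4r with h4 | h4 <;> omega
  have hd23 : l2 ≠ l3 := fun h => by rw [h] at hl2b; omega
  have hd24 : l2 ≠ l4 := by
    intro h
    rw [h] at hl2a hl2b
    rcases hl4r with h4 | h4 <;> omega
  have hd34 : l3 ≠ l4 := by
    intro h
    rw [h] at hl3a hl3b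
    rcases hl4r with h4 | h4 <;> omega
  have hsub4 : ({l1, l2, l3, l4} : Finset (Fin k)) ⊆ T := by
    intro x hx
    simp only [Finset.mem_insert, Finset.mem_singleton] at hx
    rcases hx with rfl | rfl | rfl | rfl
    · exact hl1T
    · exact hl2T
    · exact hl3T
    · exact hl4T
  have hcard4 : ({l1, l2, l3, l4} : Finset (Fin k)).card = 4 := by
    rw [Finset.card_insert_of_notMem (by simp [hd12, hd13, hd14]),
      Finset.card_insert_of_notMem (by simp [hd23, hd24]),
      Finset.card_insert_of_notMem (by simp [hd34]),
      Finset.card_singleton]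
  have : 4 ≤ T.card := hcard4 ▸ Finset.card_le_card hsub4
  omega

end Final
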